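/- Let T be a forest (acyclic simple graph) on vertex set V with k connected components, and let G be a graph on V containing T as a spanning forest, where every edge of G not in T closes a cycle. Orient the edges of G uniformly at random and independently. Then the probability that the resulting orientation admits a homomorphism to the directed 3-cycle C₃ (mapping each arc (u,v) to an arc of C₃) is at most (1/2)^{|E(G)| − |V| + k}. -/

import Mathlib

open SimpleGraph

variable {V : Type} [DecidableEq V]

/-- In an acyclic graph, if `w` is adjacent to `x` and strictly closer to `r`,
then there is a path from `r` to `x` whose second-to-last vertex is `w`. -/
lemma acyclic_pred_exists {T : SimpleGraph V} {r w x : V}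
    (hrw : T.Reachable r w) (hwx : T.Adj w x) (hlt : T.dist r w < T.dist r x) :
    ∃ P : T.Walk r x, P.IsPath ∧ P.reverse.getVert 1 = w := by
  obtain ⟨p, hp, hlen⟩ := hrw.exists_path_of_dist
  have hxp : x ∉ p.support := by
    intro hx
    have h1 : T.dist r x ≤ (p.takeUntil x hx).length := dist_le _
    have h2 := p.length_takeUntil_le hx
    omega
  refine ⟨p.concat hwx, ?_, ?_⟩
  · have : (p.concat hwx).reverse.IsPath := by
      rw [Walk.reverse_concat]
      rw [Walk.cons_isPath_iff]
      exact ⟨hp.reverse, by simpa using hxp⟩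
    simpa only [Walk.reverse_reverse] using this.reverse
  · rw [Walk.reverse_concat]; simp [Walk.getVert_cons_succ]

/-- In an acyclic graph, adjacent vertices are at different distances from `r`. -/
lemma acyclic_dist_ne {T : SimpleGraph V} (hT : T.IsAcyclic) {r u x : V}
    (hru : T.Reachable r u) (hux : T.Adj u x) : T.dist r u ≠ T.dist r x := by
  intro hEq
  have hrx : T.Reachable r x := hru.trans hux.reachable
  obtain ⟨p, hp, hlen⟩ := hru.exists_path_of_dist
  obtain ⟨q, hq, hlenq⟩ := hrx.exists_path_of_dist
  by_cases hxp : x ∈ p.support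
  · have ht : (p.takeUntil x hxp).IsPath := hp.takeUntil hxp
    have heq : (⟨p.takeUntil x hxp, ht⟩ : T.Path r x) = ⟨q, hq⟩ := hT.path_unique _ _
    have hval : p.takeUntil x hxp = q := congrArg Subtype.val heq
    have hlt : (p.takeUntil x hxp).length = q.length := by rw [hval]
    have hspec := p.take_spec hxp
    have htot : (p.takeUntil x hxp).length + (p.dropUntil x hxp).length = p.length := by
      rw [← Walk.length_append, hspec]
    have hdrop : (p.dropUntil x hxp).length = 0 := by omega
    exact hux.ne' (Walk.eq_of_length_eq_zero hdrop)
  · have hP : (p.concat hux).IsPath := by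
      have : (p.concat hux).reverse.IsPath := by
        rw [Walk.reverse_concat, Walk.cons_isPath_iff]
        exact ⟨hp.reverse, by simpa using hxp⟩
      simpa only [Walk.reverse_reverse] using this.reverse
    have heq : (⟨p.concat hux, hP⟩ : T.Path r x) = ⟨q, hq⟩ := hT.path_unique _ _
    have hval : p.concat hux = q := congrArg Subtype.val heq
    have : (p.concat hux).length = q.length := by rw [hval]
    rw [Walk.length_concat] at this
    omega

lemma acyclic_pred_unique {T : SimpleGraph V} (hT : T.IsAcyclic) {r u v x : V}
    (hru : T.Reachable r u) (hrv : T.Reachable r v)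
    (hux : T.Adj u x) (hvx : T.Adj v x)
    (h1 : T.dist r u < T.dist r x) (h2 : T.dist r v < T.dist r x) : u = v := by
  obtain ⟨P, hP, hPg⟩ := acyclic_pred_exists hru hux h1
  obtain ⟨Q, hQ, hQg⟩ := acyclic_pred_exists hrv hvx h2
  have heq : (⟨P, hP⟩ : T.Path r x) = ⟨Q, hQ⟩ := hT.path_unique _ _
  have : P = Q := congrArg Subtype.val heq
  rw [← hPg, ← hQg, this]
lemma forest_card [Fintype V] (T : SimpleGraph V) [DecidableRel T.Adj]
    (hT : T.IsAcyclic) :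
    T.edgeFinset.card + Nat.card T.ConnectedComponent ≤ Fintype.card V := by
  classical
  haveI : Finite T.ConnectedComponent :=
    Finite.of_surjective T.connectedComponentMk (fun c => c.exists_rep)
  -- root of the component of a vertex
  set root : V → V := fun w => Quot.out (T.connectedComponentMk w) with hrootdef
  have hroot_reach : ∀ w, T.Reachable w (root w) := by
    intro w
    apply ConnectedComponent.exact
    exact (Quot.out_eq (T.connectedComponentMk w)).symm ▸ rfl
  have hroot_eq : ∀ {a b}, T.Reachable a b → root a = root b := by
    intro a b hab
    simp only [hrootdef]
    rw [ConnectedComponent.sound hab]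
  -- the far endpoint of an edge
  set far : Sym2 V → V := fun e =>
    if T.dist (root (Quot.out e).1) (Quot.out e).1 < T.dist (root (Quot.out e).1) (Quot.out e).2
    then (Quot.out e).2 else (Quot.out e).1 with hfardef
  have hfar : ∀ e ∈ T.edgeFinset, ∃ near : V, T.Adj near (far e) ∧
      T.dist (root (far e)) near < T.dist (root (far e)) (far e) ∧ e = s(near, far e) := by
    intro e he
    rcases hq : Quot.out e with ⟨a, b⟩
    have hab : e = s(a, b) := by rw [← Quot.out_eq e, hq]
    have hadj : T.Adj a b := by rw [mem_edgeFinset, hab, mem_edgeSet] at he; exact he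
    have hrr : root a = root b := hroot_eq hadj.reachable
    have hne : T.dist (root a) a ≠ T.dist (root a) b :=
      acyclic_dist_ne hT ((hroot_reach a).symm) hadj
    simp only [hfardef, hq]
    by_cases hcase : T.dist (root a) a < T.dist (root a) b
    · rw [if_pos hcase]
      exact ⟨a, hadj, by rwa [← hrr], hab⟩
    · rw [if_neg hcase]
      exact ⟨b, hadj.symm, by omega, by rw [hab, Sym2.eq_swap]⟩
  -- the injection
  set Φ : T.edgeFinset ⊕ T.ConnectedComponent → V :=
    Sum.elim (fun e => far e.1) (fun c => Quot.out c) with hΦdef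
  have hout_root : ∀ c : T.ConnectedComponent, root (Quot.out c) = Quot.out c := by
    intro c
    show Quot.out (T.connectedComponentMk (Quot.out c)) = Quot.out c
    exact congrArg Quot.out (Quot.out_eq c)
  have hfar_ne_root : ∀ (e : Sym2 V), e ∈ T.edgeFinset → far e ≠ root (far e) := by
    intro e he hcontra
    obtain ⟨n, hn1, hn2, hn3⟩ := hfar e he
    rw [← hcontra] at hn2
    simp [SimpleGraph.dist_self] at hn2
  have hinj : Function.Injective Φ := by
    rintro (e | c) (e' | c') h
    · simp only [hΦdef, Sum.elim_inl] at h
      obtain ⟨n, hn1, hn2, hn3⟩ := hfar e.1 e.2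
      obtain ⟨n', hn1', hn2', hn3'⟩ := hfar e'.1 e'.2
      rw [h] at hn1 hn2 hn3
      have hnn : n = n' := by
        refine acyclic_pred_unique hT ?_ ?_ hn1 hn1' hn2 hn2'
        · exact (hroot_reach _).symm.trans hn1.symm.reachable
        · exact (hroot_reach _).symm.trans hn1'.symm.reachable
      exact congrArg Sum.inl (Subtype.ext (by rw [hn3, hnn, ← hn3']))
    · exfalso
      apply hfar_ne_root e.1 e.2
      simp only [hΦdef, Sum.elim_inl, Sum.elim_inr] at h
      rw [h]
      exact (hout_root c').symm
    · exfalso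
      apply hfar_ne_root e'.1 e'.2
      simp only [hΦdef, Sum.elim_inl, Sum.elim_inr] at h
      rw [← h]
      exact (hout_root c).symm
    · simp only [hΦdef, Sum.elim_inr] at h
      have : c = c' := by rw [← Quot.out_eq c, h]; exact Quot.out_eq c'
      rw [this]
  have hcard := Nat.card_le_card_of_injective Φ hinj
  rw [Nat.card_sum] at hcard
  simpa only [Nat.card_eq_fintype_card, Fintype.card_coe] using hcard
lemma count_le {V : Type} [Fintype V] [DecidableEq V]
    (T G : SimpleGraph V) [DecidableRel T.Adj] [DecidableRel G.Adj]
    (hsub : T ≤ G)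
    (hclose : ∀ u v, G.Adj u v → ¬ T.Adj u v → T.Reachable u v) :
    {A : V → V → Bool |
        (∀ u v, A u v = true → G.Adj u v) ∧
        (∀ u v, G.Adj u v → A u v = !A v u) ∧
        ∃ h : V → Fin 3, ∀ u v, A u v = true → h v = h u + 1}.ncard ≤
      2 ^ T.edgeFinset.card := by
  classical
  set S : Set (V → V → Bool) := {A : V → V → Bool |
        (∀ u v, A u v = true → G.Adj u v) ∧
        (∀ u v, G.Adj u v → A u v = !A v u) ∧
        ∃ h : V → Fin 3, ∀ u v, A u v = true → h v = h u + 1} with hSdef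
  have key : Nat.card S ≤ Nat.card (T.edgeFinset → Bool) := by
    apply Nat.card_le_card_of_injective
      (f := fun (A : S) (e : T.edgeFinset) =>
        A.1 (Quot.out (e.1 : Sym2 V)).1 (Quot.out (e.1 : Sym2 V)).2)
    intro A A' hAA
    obtain ⟨hGa, hskew, h, hh⟩ := A.2
    obtain ⟨hGa', hskew', h', hh'⟩ := A'.2
    have step1 : ∀ u v, T.Adj u v → A.1 u v = A'.1 u v := by
      intro u v huv
      have he : s(u, v) ∈ T.edgeFinset := by rw [mem_edgeFinset, mem_edgeSet]; exact huv
      have hc := congrFun hAA ⟨s(u, v), he⟩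
      rcases hq : Quot.out (s(u, v) : Sym2 V) with ⟨a, b⟩
      simp only [hq] at hc
      have hab : s(a, b) = s(u, v) := by have := Quot.out_eq (s(u, v) : Sym2 V); rw [hq] at this; exact this
      rcases Sym2.eq_iff.mp hab with ⟨h1, h2⟩ | ⟨h1, h2⟩
      · rwa [h1, h2] at hc
      · rw [h1, h2] at hc
        rw [hskew u v (hsub huv), hskew' u v (hsub huv), hc]
    have diff : ∀ {a b : V} (w : T.Walk a b), h b - h a = h' b - h' a := by
      intro a b w
      induction w with
      | nil => simp
      | @cons a c b hadj w ih =>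
        have hG := hsub hadj
        have hstep : h c - h a = h' c - h' a := by
          cases hx : A.1 a c with
          | true =>
            have h1 := hh a c hx
            have h2 := hh' a c (by rw [← step1 a c hadj]; exact hx)
            rw [h1, h2]; abel
          | false =>
            have hy : A.1 c a = true := by
              have h0 := hskew a c hG; rw [hx] at h0; simpa using h0.symm
            have h1 := hh c a hy
            have h2 := hh' c a (by rw [← step1 c a hadj.symm]; exact hy)
            rw [h1, h2]; abel
        calc h b - h a = (h b - h c) + (h c - h a) := by abel
        _ = (h' b - h' c) + (h' c - h' a) := by rw [ih, hstep]
        _ = h' b - h' a := by abel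
    apply Subtype.ext
    funext u v
    by_cases hG : G.Adj u v
    · by_cases hTa : T.Adj u v
      · exact step1 u v hTa
      · have hr := hclose u v hG hTa
        have hdiff : h v - h u = h' v - h' u := hr.elim fun w => diff w
        cases hx : A.1 u v with
        | true =>
          have h1 := hh u v hx
          cases hx' : A'.1 u v with
          | true => rfl
          | false =>
            exfalso
            have hy' : A'.1 v u = true := by
              have h0 := hskew' u v hG; rw [hx'] at h0; simpa using h0.symm
            have h2 := hh' v u hy'
            have h3 : (1 : Fin 3) = -1 := by
              calc (1 : Fin 3) = h v - h u := by rw [h1]; abel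
              _ = h' v - h' u := hdiff
              _ = -1 := by rw [h2]; abel
            exact absurd h3 (by decide)
        | false =>
          have hy : A.1 v u = true := by
            have h0 := hskew u v hG; rw [hx] at h0; simpa using h0.symm
          have h1 := hh v u hy
          cases hx' : A'.1 u v with
          | false => rfl
          | true =>
            exfalso
            have h2 := hh' u v hx'
            have h3 : (1 : Fin 3) = -1 := by
              calc (1 : Fin 3) = h' v - h' u := by rw [h2]; abel
              _ = h v - h u := hdiff.symm
              _ = -1 := by rw [h1]; abel
            exact absurd h3 (by decide)
    · have e1 : A.1 u v = false := by
        by_contra hne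
        exact hG (hGa u v (by simpa using hne))
      have e2 : A'.1 u v = false := by
        by_contra hne
        exact hG (hGa' u v (by simpa using hne))
      rw [e1, e2]
  rw [Nat.card_coe_set_eq, Nat.card_eq_fintype_card, Fintype.card_fun,
    Fintype.card_coe] at key
  simpa using key

/-- Let `T` be a spanning forest of `G` with `k` components, such that every
edge of `G` not in `T` closes a cycle (i.e. joins vertices in the same
component of `T`). Orienting the edges of `G` uniformly at random, the
probability that the resulting orientation admits a homomorphism to the
directed 3-cycle is at most `(1/2)^{|E(G)| − |V| + k}`. -/
theorem stmt_16 {V : Type} [Fintype V] [DecidableEq V]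
    (T G : SimpleGraph V) [DecidableRel T.Adj] [DecidableRel G.Adj]
    (hsub : T ≤ G) (hforest : T.IsAcyclic)
    (k : ℕ) (hk : k = Nat.card T.ConnectedComponent)
    (hclose : ∀ u v, G.Adj u v → ¬ T.Adj u v → T.Reachable u v) :
    (({A : V → V → Bool |
        (∀ u v, A u v = true → G.Adj u v) ∧
        (∀ u v, G.Adj u v → A u v = !A v u) ∧
        ∃ h : V → Fin 3, ∀ u v, A u v = true → h v = h u + 1}.ncard : ℝ) /
      (2 : ℝ) ^ (G.edgeFinset.card : ℕ)) ≤
      (1 / 2 : ℝ) ^ ((G.edgeFinset.card : ℝ) - (Fintype.card V : ℝ) + k) := by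
  classical
  have hcount := count_le T G hsub hclose
  have hforest' := forest_card T hforest
  rw [← hk] at hforest'
  set t := T.edgeFinset.card with ht
  set E := G.edgeFinset.card with hE
  set n := Fintype.card V with hn
  rw [div_le_iff₀ (by positivity)]
  have htk : (t : ℝ) + k ≤ n := by exact_mod_cast hforest'
  calc ({A : V → V → Bool |
        (∀ u v, A u v = true → G.Adj u v) ∧
        (∀ u v, G.Adj u v → A u v = !A v u) ∧
        ∃ h : V → Fin 3, ∀ u v, A u v = true → h v = h u + 1}.ncard : ℝ)
      ≤ (2 : ℝ) ^ (t : ℕ) := by exact_mod_cast hcount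
    _ ≤ (2 : ℝ) ^ ((n : ℝ) - k) := by
        rw [← Real.rpow_natCast 2 t]
        exact Real.rpow_le_rpow_of_exponent_le one_le_two (by linarith)
    _ = (1 / 2 : ℝ) ^ ((E : ℝ) - (n : ℝ) + k) * (2 : ℝ) ^ (E : ℕ) := by
        rw [one_div, Real.inv_rpow (by norm_num : (0:ℝ) ≤ 2),
          ← Real.rpow_neg (by norm_num : (0:ℝ) ≤ 2),
          ← Real.rpow_natCast 2 E, ← Real.rpow_add (by norm_num : (0:ℝ) < 2)]
        congr 1
        ring
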